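/- If w ∈ W_I is an I-cycle, then the centralizer of w in W_I equals ⟨w⟩ when δ_I(w) = 1 (w is an odd permutation), and equals ⟨w, σ⟩ when δ_I(w) = 0 (w is an even permutation); in either case |C_{W_I}(w)| = 2n = |I|. -/

import Mathlib

/-- Centralizer of an `I`-cycle in the hyperoctahedral group `W_I = C_{Sym(I)}(σ)`:
it is `⟨w⟩` if `w` is odd, and `⟨w,σ⟩` if `w` is even; in either case it has order
`2n = |I|`. -/
theorem cent_I_cycle {I : Type*} [Fintype I] [DecidableEq I] (n : ℕ) (hn : 1 ≤ n)
    (hcard : Fintype.card I = 2 * n)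
    (σ : Equiv.Perm I) (hinv : σ * σ = 1) (hfpf : ∀ a : I, σ a ≠ a)
    (w : Equiv.Perm I) (hw : w ∈ Subgroup.centralizer ({σ} : Set (Equiv.Perm I)))
    (hcyc : ∀ a b : I, ∃ g ∈ Subgroup.closure ({w, σ} : Set (Equiv.Perm I)), g a = b) :
    (Equiv.Perm.sign w = -1 →
      Subgroup.centralizer ({σ} : Set (Equiv.Perm I)) ⊓
          Subgroup.centralizer ({w} : Set (Equiv.Perm I)) = Subgroup.zpowers w) ∧
    (Equiv.Perm.sign w = 1 →
      Subgroup.centralizer ({σ} : Set (Equiv.Perm I)) ⊓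
          Subgroup.centralizer ({w} : Set (Equiv.Perm I)) =
        Subgroup.closure ({w, σ} : Set (Equiv.Perm I))) ∧
    Nat.card ↥(Subgroup.centralizer ({σ} : Set (Equiv.Perm I)) ⊓
        Subgroup.centralizer ({w} : Set (Equiv.Perm I))) = 2 * n := by
  classical
  have hne : Nonempty I := by
    rw [← Fintype.card_pos_iff, hcard]; omega
  obtain ⟨a₀⟩ := hne
  set C : Subgroup (Equiv.Perm I) :=
    Subgroup.centralizer ({σ} : Set (Equiv.Perm I)) ⊓
      Subgroup.centralizer ({w} : Set (Equiv.Perm I)) with hCdef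
  set A : Subgroup (Equiv.Perm I) := Subgroup.closure ({w, σ} : Set (Equiv.Perm I)) with hAdef
  have hσw : σ * w = w * σ := Subgroup.mem_centralizer_iff.mp hw σ rfl
  have hσw' : Commute σ w := hσw
  have hwC : w ∈ C := by
    refine ⟨hw, Subgroup.mem_centralizer_iff.mpr ?_⟩
    intro h hh; rw [Set.mem_singleton_iff] at hh; subst hh; rfl
  have hσC : σ ∈ C := by
    constructor
    · refine Subgroup.mem_centralizer_iff.mpr ?_
      intro h hh; rw [Set.mem_singleton_iff] at hh; subst hh; rfl
    · refine Subgroup.mem_centralizer_iff.mpr ?_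
      intro h hh; rw [Set.mem_singleton_iff] at hh; subst hh; exact hσw.symm
  have hAC : A ≤ C := by
    rw [hAdef]
    refine (Subgroup.closure_le _).mpr ?_
    intro x hx
    rcases hx with hx | hx
    · subst hx; exact hwC
    · rw [Set.mem_singleton_iff] at hx; subst hx; exact hσC
  have hcomm : ∀ g ∈ C, ∀ h ∈ A, Commute g h := by
    intro g hg h hh
    have hgσ : Commute g σ := (Subgroup.mem_centralizer_iff.mp hg.1 σ rfl).symm
    have hgw : Commute g w := (Subgroup.mem_centralizer_iff.mp hg.2 w rfl).symm
    induction hh using Subgroup.closure_induction with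
    | mem x hx => rcases hx with hx | hx
                  · subst hx; exact hgw
                  · rw [Set.mem_singleton_iff] at hx; subst hx; exact hgσ
    | one => exact Commute.one_right g
    | mul x y hx hy ihx ihy => exact ihx.mul_right ihy
    | inv x hx ih => exact ih.inv_right
  have hfix : ∀ g ∈ C, ∀ a : I, g a = a → g = 1 := by
    intro g hg a hga
    ext b
    obtain ⟨h, hh, rfl⟩ := hcyc a b
    have hc := (hcomm g hg h hh).eq
    have : (g * h) a = (h * g) a := by rw [hc]
    simpa [Equiv.Perm.mul_apply, hga] using this
  have hone : ∀ g ∈ C, ∀ h ∈ C, (g : Equiv.Perm I) a₀ = h a₀ → g = h := by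
    intro g hg h hh heq
    have hmem : h⁻¹ * g ∈ C := mul_mem (inv_mem hh) hg
    have hfx : (h⁻¹ * g) a₀ = a₀ := by
      rw [Equiv.Perm.mul_apply, heq, Equiv.Perm.inv_def, Equiv.symm_apply_apply]
    have := hfix _ hmem a₀ hfx
    rw [inv_mul_eq_one] at this
    exact this.symm
  have hcardC : Nat.card ↥C ≤ 2 * n := by
    have hinj : Function.Injective (fun g : ↥C => (g : Equiv.Perm I) a₀) := by
      intro g1 g2 h12
      exact Subtype.ext (hone _ g1.2 _ g2.2 h12)
    calc Nat.card ↥C ≤ Nat.card I := Nat.card_le_card_of_injective _ hinj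
      _ = 2 * n := by rw [Nat.card_eq_fintype_card, hcard]
  have hcardA : 2 * n ≤ Nat.card ↥A := by
    have hsurj : Function.Surjective (fun g : ↥A => (g : Equiv.Perm I) a₀) := by
      intro b
      obtain ⟨g, hg, hgb⟩ := hcyc a₀ b
      exact ⟨⟨g, hg⟩, hgb⟩
    calc 2 * n = Nat.card I := by rw [Nat.card_eq_fintype_card, hcard]
      _ ≤ Nat.card ↥A := Nat.card_le_card_of_surjective _ hsurj
  have hAeqC : A = C := by
    apply SetLike.coe_injective
    refine Set.eq_of_subset_of_ncard_le hAC ?_ (Set.toFinite _)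
    rw [← Nat.card_coe_set_eq, ← Nat.card_coe_set_eq]
    exact hcardC.trans hcardA
  have hcardfinal : Nat.card ↥C = 2 * n := by
    refine le_antisymm hcardC ?_
    rw [← hAeqC]; exact hcardA
  -- orbit machinery
  set m : ℕ := orderOf w with hmdef
  have hm : 0 < m := orderOf_pos w
  have hzred : ∀ (k : ℤ) (a : I), ∃ j < m, (w ^ j : Equiv.Perm I) a = (w ^ k : Equiv.Perm I) a := by
    intro k a
    have hmo : (0 : ℤ) < (m : ℤ) := by exact_mod_cast hm
    have h1 : 0 ≤ k % (m : ℤ) := Int.emod_nonneg k (by omega)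
    have h2 : k % (m : ℤ) < (m : ℤ) := Int.emod_lt_of_pos k hmo
    refine ⟨(k % (m : ℤ)).toNat, by omega, ?_⟩
    have : (w : Equiv.Perm I) ^ (((k % (m : ℤ)).toNat : ℤ)) = w ^ k := by
      rw [Int.toNat_of_nonneg h1, hmdef, zpow_mod_orderOf]
    rw [← zpow_natCast, this]
  have hpinj : ∀ (a : I), ∀ j < m, ∀ k < m, (w ^ j : Equiv.Perm I) a = (w ^ k : Equiv.Perm I) a → j = k := by
    have key : ∀ (a : I), ∀ j k, j ≤ k → k < m → (w ^ j : Equiv.Perm I) a = (w ^ k : Equiv.Perm I) a → j = k := by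
      intro a j k hle hk hjk
      have hfp : (w ^ (k - j) : Equiv.Perm I) ((w ^ j : Equiv.Perm I) a) = (w ^ j : Equiv.Perm I) a := by
        rw [← Equiv.Perm.mul_apply, ← pow_add, Nat.sub_add_cancel hle, ← hjk]
      have h1 : (w ^ (k - j) : Equiv.Perm I) = 1 := hfix _ (pow_mem hwC _) _ hfp
      have hdvd : m ∣ (k - j) := by
        rw [hmdef]; exact orderOf_dvd_of_pow_eq_one h1
      rcases Nat.eq_zero_or_pos (k - j) with h0 | hpos
      · omega
      · have := Nat.le_of_dvd hpos hdvd; omega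
    intro a j hj k hk hjk
    rcases le_total j k with h | h
    · exact key a j k h hk hjk
    · exact (key a k j h hj hjk.symm).symm
  set Torb : I → Finset I := fun a => (Finset.range m).image (fun k => (w ^ k : Equiv.Perm I) a)
    with hTdef
  have hTcard : ∀ a, (Torb a).card = m := by
    intro a
    rw [hTdef]
    rw [Finset.card_image_of_injOn, Finset.card_range]
    intro j hj k hk hjk
    exact hpinj a j (Finset.mem_range.mp hj) k (Finset.mem_range.mp hk) hjk
  have hTmem : ∀ a b, b ∈ Torb a ↔ ∃ k : ℤ, (w ^ k : Equiv.Perm I) a = b := by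
    intro a b
    rw [hTdef]
    simp only [Finset.mem_image, Finset.mem_range]
    constructor
    · rintro ⟨k, hk, rfl⟩
      exact ⟨(k : ℤ), by rw [zpow_natCast]⟩
    · rintro ⟨k, rfl⟩
      obtain ⟨j, hj, hja⟩ := hzred k a
      exact ⟨j, hj, hja⟩
  have hσpow : ∀ (k : ℤ) (y : I), σ ((w ^ k : Equiv.Perm I) y) = (w ^ k : Equiv.Perm I) (σ y) := by
    intro k y
    rw [← Equiv.Perm.mul_apply, (hσw'.zpow_right k).eq, Equiv.Perm.mul_apply]
  have hσσ : ∀ y : I, σ (σ y) = y := by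
    intro y
    have : (σ * σ) y = (1 : Equiv.Perm I) y := by rw [hinv]
    simpa [Equiv.Perm.mul_apply] using this
  have hup : ∀ (c y : I) (k : ℤ), (w ^ k : Equiv.Perm I) c = y →
      (w ^ (1 + k) : Equiv.Perm I) c = w y := by
    intro c y k hk
    rw [zpow_add, Equiv.Perm.mul_apply, zpow_one, hk]
  have hdown : ∀ (c y : I) (k : ℤ), (w ^ k : Equiv.Perm I) c = w y →
      (w ^ (k - 1) : Equiv.Perm I) c = y := by
    intro c y k hk
    have h1 : (w ^ (k - 1) : Equiv.Perm I) c = w⁻¹ ((w ^ k : Equiv.Perm I) c) := by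
      rw [sub_eq_add_neg, add_comm, zpow_add, Equiv.Perm.mul_apply, zpow_neg_one]
    rw [h1, hk, Equiv.Perm.inv_def, Equiv.symm_apply_apply]
  have hPw : ∀ y : I, w y ∈ Torb a₀ ∪ Torb (σ a₀) ↔ y ∈ Torb a₀ ∪ Torb (σ a₀) := by
    intro y
    simp only [Finset.mem_union, hTmem]
    constructor
    · rintro (⟨k, hk⟩ | ⟨k, hk⟩)
      · exact Or.inl ⟨k - 1, hdown _ _ _ hk⟩
      · exact Or.inr ⟨k - 1, hdown _ _ _ hk⟩
    · rintro (⟨k, hk⟩ | ⟨k, hk⟩)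
      · exact Or.inl ⟨1 + k, hup _ _ _ hk⟩
      · exact Or.inr ⟨1 + k, hup _ _ _ hk⟩
  have hPσ : ∀ y : I, σ y ∈ Torb a₀ ∪ Torb (σ a₀) ↔ y ∈ Torb a₀ ∪ Torb (σ a₀) := by
    have fwd : ∀ y : I, y ∈ Torb a₀ ∪ Torb (σ a₀) → σ y ∈ Torb a₀ ∪ Torb (σ a₀) := by
      intro y hy
      rw [Finset.mem_union, hTmem, hTmem] at hy ⊢
      rcases hy with ⟨k, rfl⟩ | ⟨k, rfl⟩
      · exact Or.inr ⟨k, (hσpow k a₀).symm⟩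
      · exact Or.inl ⟨k, by rw [hσpow k (σ a₀), hσσ]⟩
    intro y
    constructor
    · intro hy
      have h2 := fwd (σ y) hy
      rwa [hσσ] at h2
    · exact fwd y
  have hcover : ∀ b : I, b ∈ Torb a₀ ∪ Torb (σ a₀) := by
    have hstep : ∀ g ∈ A, ∀ x : I, g x ∈ Torb a₀ ∪ Torb (σ a₀) ↔ x ∈ Torb a₀ ∪ Torb (σ a₀) := by
      intro g hg
      induction hg using Subgroup.closure_induction with
      | mem x hx =>
        rcases hx with hx | hx
        · rw [hx]; exact hPw
        · rw [Set.mem_singleton_iff] at hx; rw [hx]; exact hPσ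
      | one => intro y; simp
      | mul x y hx hy ihx ihy =>
        intro z
        rw [Equiv.Perm.mul_apply]
        exact (ihx (y z)).trans (ihy z)
      | inv x hx ih =>
        intro z
        constructor
        · intro hz
          have h2 := (ih (x⁻¹ z)).mpr hz
          rwa [Equiv.Perm.inv_def, Equiv.apply_symm_apply] at h2
        · intro hz
          exact (ih (x⁻¹ z)).mp (by rwa [Equiv.Perm.inv_def, Equiv.apply_symm_apply])
    intro b
    obtain ⟨g, hg, rfl⟩ := hcyc a₀ b
    refine (hstep g hg a₀).mpr ?_
    refine Finset.mem_union.mpr (Or.inl ?_)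
    exact (hTmem a₀ a₀).mpr ⟨0, by simp⟩
  -- the `sign = -1` key fact
  have hneg : Equiv.Perm.sign w = -1 → σ ∈ Subgroup.zpowers w := by
    intro hsgn
    by_cases hσin : σ a₀ ∈ Torb a₀
    · obtain ⟨k, hka⟩ := (hTmem a₀ (σ a₀)).mp hσin
      have hmem : (w ^ k)⁻¹ * σ ∈ C := mul_mem (inv_mem (zpow_mem hwC k)) hσC
      have hfx : ((w ^ k)⁻¹ * σ) a₀ = a₀ := by
        rw [Equiv.Perm.mul_apply, ← hka, Equiv.Perm.inv_def, Equiv.symm_apply_apply]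
      have h1 := hfix _ hmem a₀ hfx
      rw [inv_mul_eq_one] at h1
      exact Subgroup.mem_zpowers_iff.mpr ⟨k, h1⟩
    · exfalso
      have hdisj : Disjoint (Torb a₀) (Torb (σ a₀)) := by
        rw [Finset.disjoint_left]
        intro b hb1 hb2
        obtain ⟨j, hj⟩ := (hTmem a₀ b).mp hb1
        obtain ⟨k, hk⟩ := (hTmem (σ a₀) b).mp hb2
        apply hσin
        refine (hTmem a₀ (σ a₀)).mpr ⟨-k + j, ?_⟩
        rw [zpow_add, Equiv.Perm.mul_apply, hj, ← hk, ← Equiv.Perm.mul_apply, ← zpow_add,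
          neg_add_cancel, zpow_zero, Equiv.Perm.one_apply]
      have hunion : Torb a₀ ∪ Torb (σ a₀) = Finset.univ :=
        Finset.eq_univ_iff_forall.mpr hcover
      have h2m : m + m = 2 * n := by
        have hcu := Finset.card_union_of_disjoint hdisj
        rw [hunion, Finset.card_univ, hcard, hTcard, hTcard] at hcu
        omega
      have hmn : m = n := by omega
      by_cases hn1 : n = 1
      · have hw1 : w = 1 := orderOf_eq_one_iff.mp (by omega)
        rw [hw1] at hsgn
        simp at hsgn
      · have hwne : ∀ a : I, w a ≠ a := by
          intro a ha
          have hw1 := hfix w hwC a ha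
          have : m = 1 := by rw [hmdef, hw1, orderOf_one]
          omega
        have hsupp : w.support = Finset.univ :=
          Finset.eq_univ_iff_forall.mpr fun a => Equiv.Perm.mem_support.mpr (hwne a)
        have hctyp : ∀ x ∈ w.cycleType, x = n := by
          intro x hx
          rw [Equiv.Perm.cycleType_def, Multiset.mem_map] at hx
          obtain ⟨c, hc, hcx⟩ := hx
          have hc' : c ∈ w.cycleFactorsFinset := hc
          have hcyc' := (Equiv.Perm.mem_cycleFactorsFinset_iff.mp hc').1
          obtain ⟨a, ha1, -⟩ := hcyc'
          have hceq := Equiv.Perm.cycle_is_cycleOf (Equiv.Perm.mem_support.mpr ha1) hc'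
          have hsa : (w.cycleOf a).support = Torb a := by
            ext b
            rw [Equiv.Perm.mem_support_cycleOf_iff, hTmem]
            constructor
            · rintro ⟨⟨i, hi⟩, -⟩; exact ⟨i, hi⟩
            · rintro ⟨i, hi⟩; exact ⟨⟨i, hi⟩, Equiv.Perm.mem_support.mpr (hwne a)⟩
          rw [← hcx]
          simp only [Function.comp_apply]
          rw [hceq, hsa, hTcard, hmn]
        have hsum := Equiv.Perm.sum_cycleType w
        rw [hsupp, Finset.card_univ, hcard] at hsum
        have hrep : w.cycleType = Multiset.replicate (Multiset.card w.cycleType) n :=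
          Multiset.eq_replicate_card.mpr hctyp
        rw [hrep, Multiset.sum_replicate, smul_eq_mul] at hsum
        have hcard2 : Multiset.card w.cycleType = 2 :=
          Nat.eq_of_mul_eq_mul_right (by omega) hsum
        rw [Equiv.Perm.sign_of_cycleType] at hsgn
        rw [Equiv.Perm.sum_cycleType, hsupp, Finset.card_univ, hcard, hcard2] at hsgn
        have hev : ((-1 : ℤˣ)) ^ (2 * n + 2) = 1 := Even.neg_one_pow ⟨n + 1, by ring⟩
        rw [hev] at hsgn
        exact absurd hsgn (by decide)
  refine ⟨?_, ?_, hcardfinal⟩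
  · intro hsgn
    have hσz := hneg hsgn
    have hAz : A = Subgroup.zpowers w := by
      refine le_antisymm ?_ ?_
      · rw [hAdef]
        refine (Subgroup.closure_le _).mpr ?_
        intro x hx
        rcases hx with hx | hx
        · rw [hx]; exact Subgroup.mem_zpowers w
        · rw [Set.mem_singleton_iff] at hx; rw [hx]; exact hσz
      · rw [Subgroup.zpowers_le, hAdef]
        exact Subgroup.subset_closure (Set.mem_insert w _)
    rw [← hAeqC]
    exact hAz
  · intro _
    exact hAeqC.symm
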